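/- Let n ≥ 3 be an integer, ℓ > 0, m > 0, and β = 1. If the Birmingham metric function f(r) = 1 − 2m/r^{n−2} − r²/ℓ² has a zero in (0,∞), then m ≤ (ℓ^{n−2}/n)·(1 − 2/n)^{n/2 − 1}. -/

import Mathlib

/-- For `β = 1` and `m > 0`: if the Birmingham metric function
`f(r) = 1 − 2m/r^(n−2) − r²/ℓ²` has a zero in `(0,∞)`, then
`m ≤ (ℓ^(n−2)/n)·(1 − 2/n)^(n/2 − 1)`. -/
theorem birmingham_mass_bound (n : ℕ) (hn : 3 ≤ n) (ℓ m : ℝ)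
    (hℓ : 0 < ℓ) (hm : 0 < m)
    (hzero : ∃ r : ℝ, 0 < r ∧ 1 - 2 * m / r ^ (n - 2) - r ^ 2 / ℓ ^ 2 = 0) :
    m ≤ (ℓ ^ (n - 2) / (n : ℝ)) * (1 - 2 / (n : ℝ)) ^ ((n : ℝ) / 2 - 1) := by
  obtain ⟨r, hr, heq⟩ := hzero
  have hn3 : (3 : ℝ) ≤ (n : ℝ) := by exact_mod_cast hn
  have hnpos : (0 : ℝ) < n := by linarith
  set a : ℝ := ((n : ℝ) - 2) / 2 with ha
  set c : ℝ := ((n : ℝ) - 2) / (n : ℝ) with hc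
  have hc0 : 0 < c := by rw [hc]; apply div_pos <;> linarith
  have hc1 : c < 1 := by rw [hc, div_lt_one hnpos]; linarith
  have h1cpos : 0 < 1 - c := by linarith
  have h1c : 1 - c = 2 / n := by rw [hc]; field_simp; ring
  set x : ℝ := r ^ 2 / ℓ ^ 2 with hx
  have hx0 : 0 < x := by positivity
  have hrn : (0 : ℝ) < r ^ (n - 2) := by positivity
  have hmval : m = r ^ (n - 2) * (1 - x) / 2 := by
    field_simp at heq ⊢
    nlinarith [heq]
  have hx1 : x < 1 := by nlinarith [hmval, hrn, hm]
  have h1x : 0 < 1 - x := by linarith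
  -- express r ^ (n-2) via rpow
  have hcast : ((n - 2 : ℕ) : ℝ) = (n : ℝ) - 2 := by
    have h2 : (2 : ℕ) ≤ n := by omega
    push_cast [Nat.cast_sub h2]
    ring
  have hrpow : (r ^ 2) ^ a = r ^ (n - 2) := by
    rw [← Real.rpow_natCast r (n - 2), hcast, ← Real.rpow_natCast r 2,
      ← Real.rpow_mul hr.le]
    congr 1
    rw [ha]; push_cast; ring
  have hlpow : (ℓ ^ 2) ^ a = ℓ ^ (n - 2) := by
    rw [← Real.rpow_natCast ℓ (n - 2), hcast, ← Real.rpow_natCast ℓ 2,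
      ← Real.rpow_mul hℓ.le]
    congr 1
    rw [ha]; push_cast; ring
  have hlp : (0 : ℝ) < ℓ ^ (n - 2) := by positivity
  have hxa : x ^ a = r ^ (n - 2) / ℓ ^ (n - 2) := by
    rw [hx, Real.div_rpow (by positivity) (by positivity), hrpow, hlpow]
  -- AM-GM
  have hgm : (x / c) ^ c * ((1 - x) / (1 - c)) ^ (1 - c) ≤ 1 := by
    have h := Real.geom_mean_le_arith_mean2_weighted hc0.le h1cpos.le
      (by positivity : (0:ℝ) ≤ x / c) (div_nonneg h1x.le h1cpos.le)
      (by ring)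
    have heq1 : c * (x / c) + (1 - c) * ((1 - x) / (1 - c)) = 1 := by
      rw [mul_div_cancel₀ _ hc0.ne', mul_div_cancel₀ _ h1cpos.ne']
      ring
    linarith [h.trans_eq heq1]
  -- raise to power n/2
  have hp : (0 : ℝ) < (n : ℝ) / 2 := by linarith
  have hb1 : (0 : ℝ) ≤ (x / c) ^ c := Real.rpow_nonneg (by positivity) _
  have hb2 : (0 : ℝ) ≤ ((1 - x) / (1 - c)) ^ (1 - c) :=
    Real.rpow_nonneg (div_nonneg h1x.le h1cpos.le) _
  have hgm2 : (x / c) ^ a * ((1 - x) / (1 - c)) ≤ 1 := by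
    have h := Real.rpow_le_rpow (mul_nonneg hb1 hb2) hgm hp.le
    rw [Real.one_rpow, Real.mul_rpow hb1 hb2,
      ← Real.rpow_mul (by positivity), ← Real.rpow_mul (div_nonneg h1x.le h1cpos.le)] at h
    have e1 : c * ((n : ℝ) / 2) = a := by rw [hc, ha]; field_simp
    have e2 : (1 - c) * ((n : ℝ) / 2) = 1 := by rw [h1c]; field_simp
    rwa [e1, e2, Real.rpow_one] at h
  have hkey : x ^ a * (1 - x) ≤ c ^ a * (1 - c) := by
    rw [Real.div_rpow hx0.le hc0.le] at hgm2
    have hca : (0 : ℝ) < c ^ a := Real.rpow_pos_of_pos hc0 _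
    rw [div_mul_div_comm, div_le_one (by positivity)] at hgm2
    linarith [hgm2]
  -- conclude
  have hexp : (n : ℝ) / 2 - 1 = a := by rw [ha]; ring
  have hbase : 1 - 2 / (n : ℝ) = c := by rw [hc]; field_simp
  rw [hexp, hbase]
  have hmval2 : m = ℓ ^ (n - 2) * (x ^ a * (1 - x)) / 2 := by
    rw [hmval, hxa]
    field_simp
  rw [hmval2]
  have hle : ℓ ^ (n - 2) * (x ^ a * (1 - x)) / 2 ≤ ℓ ^ (n - 2) * (c ^ a * (1 - c)) / 2 := by
    have := hlp
    gcongr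
  refine hle.trans_eq ?_
  rw [h1c]
  field_simp
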